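/- Let P ⊆ (2^ℕ)^ω be a perfect product and let E be an equivalence relation on (2^ℕ)^ω induced by a continuous map ξ: (2^ℕ)^ω → 2^ℕ (x E y iff ξ(x) = ξ(y)). Say E is reduced to U ⊆ ω on P if for all x, y ∈ P, x ↾ U = y ↾ U implies x E y. If U₀, U₁ ⊆ ω and E is reduced to both U₀ and U₁ on P, then E is reduced to U₀ ∩ U₁ on P. -/
import Mathlib


/-- Cantor space `2^ℕ`. -/
abbrev Cantor := ℕ → Bool

/-- A perfect subset of Cantor space: nonempty, closed, no isolated points. -/
def PerfectSet (X : Set Cantor) : Prop := X.Nonempty ∧ Perfect X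

/-- The length of the stem of `X`: the length of the longest finite binary string
that is an initial segment of every element of `X`. -/
noncomputable def stemLen (X : Set Cantor) : ℕ :=
  sSup {n | ∀ x ∈ X, ∀ y ∈ X, ∀ i < n, x i = y i}

/-- Simple splitting piece `X^i = {x ∈ X | x(|stem X|) = i}`. -/
noncomputable def splitPiece (X : Set Cantor) (i : Bool) : Set Cantor :=
  {x ∈ X | x (stemLen X) = i}

/-- Iterated simple splitting `X_s`: `X_Λ = X`, `X_{s⌢i} = (X_s)^i`. -/
noncomputable def iterSplit (X : Set Cantor) (s : List Bool) : Set Cantor :=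
  s.foldl splitPiece X

/-- Refinement `X ≤ₙ Y`: `X_s ⊆ Y_s` for every binary string `s` of length `n`. -/
def refines (n : ℕ) (X Y : Set Cantor) : Prop :=
  ∀ s : List Bool, s.length = n → iterSplit X s ⊆ iterSplit Y s

/-- The perfect product `∏_k P(k) ⊆ (2^ℕ)^ω` determined by coordinatewise sets. -/
def prodSet (P : ℕ → Set Cantor) : Set (ℕ → Cantor) := {x | ∀ k, x k ∈ P k}

/-- `P` is a perfect product (given by its coordinates `P k`). -/
def PerfectProduct (P : ℕ → Set Cantor) : Prop := ∀ k, PerfectSet (P k)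

/-- `q(m,j) = |{k < m : φ(k) = j}|`. -/
def qcount (phi : ℕ → ℕ) (m j : ℕ) : ℕ :=
  ((Finset.range m).filter fun k => phi k = j).card

/-- `σ/j`: the substring of `σ` read along the positions `k < |σ|` with `φ(k) = j`. -/
def subAlong (phi : ℕ → ℕ) (j : ℕ) (σ : List Bool) : List Bool :=
  ((List.range σ.length).filter fun k => phi k = j).map fun k => σ.getD k false

/-- The split piece `P_σ` of a perfect product, coordinatewise: `P_σ(j) = (P(j))_{σ/j}`. -/
noncomputable def prodSplit (phi : ℕ → ℕ) (P : ℕ → Set Cantor) (σ : List Bool) :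
    ℕ → Set Cantor :=
  fun j => iterSplit (P j) (subAlong phi j σ)

/-- Refinement of perfect products: `P ≤ₘ Q` iff `P(j) ≤_{q(m,j)} Q(j)` for all `j`. -/
def prodRef (phi : ℕ → ℕ) (m : ℕ) (P Q : ℕ → Set Cantor) : Prop :=
  ∀ j, refines (qcount phi m j) (P j) (Q j)

/-- `D(σ,τ) = ω \ {φ(i) : i < m, σ(i) ≠ τ(i)}` (for strings of length `m`). -/
def Dset (phi : ℕ → ℕ) (m : ℕ) (σ τ : List Bool) : Set ℕ :=
  {j | ¬ ∃ i < m, σ.getD i false ≠ τ.getD i false ∧ phi i = j}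

/-- `E` (induced by `ξ`) is reduced to `U ⊆ ω` on `P`:
`x ↾ U = y ↾ U` implies `x E y` for `x, y ∈ P`. -/
def reducedTo (ξ : (ℕ → Cantor) → Cantor) (U : Set ℕ) (S : Set (ℕ → Cantor)) : Prop :=
  ∀ x ∈ S, ∀ y ∈ S, (∀ k ∈ U, x k = y k) → ξ x = ξ y

/-- if the equivalence relation induced by a continuous `ξ` is
reduced to `U₀` and to `U₁` on a perfect product `P`, then it is reduced to
`U₀ ∩ U₁` on `P`. -/
theorem stmt11 (P : ℕ → Set Cantor) (hP : PerfectProduct P)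
    (ξ : (ℕ → Cantor) → Cantor) (hξ : Continuous ξ) (U₀ U₁ : Set ℕ)
    (h₀ : reducedTo ξ U₀ (prodSet P)) (h₁ : reducedTo ξ U₁ (prodSet P)) :
    reducedTo ξ (U₀ ∩ U₁) (prodSet P) := by
  intro x hx y hy hxy
  classical
  set z : ℕ → Cantor := fun k => if k ∈ U₀ then x k else y k with hz
  have hzP : z ∈ prodSet P := by
    intro k
    by_cases h : k ∈ U₀ <;> simp [hz, h, hx k, hy k]
  have h1 : ξ x = ξ z := h₀ x hx z hzP (fun k hk => by simp [hz, hk])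
  have h2 : ξ z = ξ y := h₁ z hzP y hy (by
    intro k hk
    by_cases h : k ∈ U₀
    · simpa [hz, h] using hxy k ⟨h, hk⟩
    · simp [hz, h])
  rw [h1, h2]
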